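/- Let λ > 0 and let Q = (a,b) ∈ Ω_λ with λ|b| < 1. The λ-Funk distance from the horizontal line s: x₂ = c (with λ|c| < 1) to Q is d_F(s,Q) = (1/λ)ln[(1 - λ²bc + λ|c - b|)/(1 - λ²b²)], realized at the point P* = (ra, c) ∈ s where r = (1 - λ²bc + λ|c-b|)/(1 - λ²b²); i.e., d_F(P*,Q) = (1/λ)ln r and d_F(P',Q) ≥ (1/λ)ln r for all P' ∈ s ∩ Ω_λ. -/

import Mathlib

open RealInnerProductSpace Classical

noncomputable def pt (a b : ℝ) : EuclideanSpace ℝ (Fin 2) :=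
  (WithLp.equiv 2 (Fin 2 → ℝ)).symm ![a, b]

/-- The λ-Funk metric. -/
noncomputable def Funk (lam : ℝ) (x y : EuclideanSpace ℝ (Fin 2)) : ℝ :=
  (Real.sqrt (lam ^ 2 * ⟪x, y⟫ ^ 2 + ‖y‖ ^ 2 * (1 - lam ^ 2 * ‖x‖ ^ 2)) + lam * ⟪x, y⟫) /
    (1 - lam ^ 2 * ‖x‖ ^ 2)

/-- The λ-Funk distance. -/
noncomputable def dF (lam : ℝ) (P Q : EuclideanSpace ℝ (Fin 2)) : ℝ :=
  if P = Q then 0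
  else (1 / lam) * Real.log
    ((Real.sqrt (lam ^ 2 * ⟪P, Q - P⟫ ^ 2 + (1 - lam ^ 2 * ‖P‖ ^ 2) * ‖Q - P‖ ^ 2)
        - lam * ⟪P, Q - P⟫) /
     (Real.sqrt (lam ^ 2 * ⟪P, Q - P⟫ ^ 2 + (1 - lam ^ 2 * ‖P‖ ^ 2) * ‖Q - P‖ ^ 2)
        - lam * ⟪Q, Q - P⟫))

lemma pt_sub (a b c d : ℝ) : pt a b - pt c d = pt (a-c) (b-d) := by
  ext i
  fin_cases i <;> simp [pt]

lemma inner_pt (a b c d : ℝ) : ⟪pt a b, pt c d⟫ = a*c + b*d := by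
  simp [pt, PiLp.inner_apply, Fin.sum_univ_two]; ring

lemma norm_pt_sq (a b : ℝ) : ‖pt a b‖^2 = a^2 + b^2 := by
  rw [← real_inner_self_eq_norm_sq, inner_pt]
  ring

lemma pt_inj {a b c d : ℝ} (h : pt a b = pt c d) : a = c ∧ b = d := by
  have h0 := congrFun ((WithLp.equiv 2 (Fin 2 → ℝ)).symm.injective h) 0
  have h1 := congrFun ((WithLp.equiv 2 (Fin 2 → ℝ)).symm.injective h) 1
  exact ⟨h0, h1⟩

lemma funk_key (lam p1 p2 q1 q2 S : ℝ) (hlam : 0 < lam)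
    (hQ : lam^2*(q1^2+q2^2) < 1)
    (hv2 : 0 < (q1-p1)^2+(q2-p2)^2)
    (hS : S = Real.sqrt (lam^2*(p1*(q1-p1)+p2*(q2-p2))^2
        + (1 - lam^2*(p1^2+p2^2))*((q1-p1)^2+(q2-p2)^2))) :
    1 < (S - lam*(p1*(q1-p1)+p2*(q2-p2)))/(S - lam*(q1*(q1-p1)+q2*(q2-p2))) ∧
    lam^2*((p1 - (S - lam*(p1*(q1-p1)+p2*(q2-p2)))/(S - lam*(q1*(q1-p1)+q2*(q2-p2)))*q1)^2
         + (p2 - (S - lam*(p1*(q1-p1)+p2*(q2-p2)))/(S - lam*(q1*(q1-p1)+q2*(q2-p2)))*q2)^2)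
      = ((S - lam*(p1*(q1-p1)+p2*(q2-p2)))/(S - lam*(q1*(q1-p1)+q2*(q2-p2))) - 1)^2 := by
  set u := p1*(q1-p1)+p2*(q2-p2) with hu
  set w := q1*(q1-p1)+q2*(q2-p2) with hw
  set v2 := (q1-p1)^2+(q2-p2)^2 with hv
  have hE : 0 ≤ lam^2*u^2 + (1 - lam^2*(p1^2+p2^2))*v2 := by
    have hid : lam^2*u^2 + (1 - lam^2*(p1^2+p2^2))*v2
        = (lam*w)^2 + (1 - lam^2*(q1^2+q2^2))*v2 := by
      rw [hu, hw, hv]; ring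
    nlinarith [sq_nonneg (lam*w)]
  have hS0 : 0 ≤ S := hS ▸ Real.sqrt_nonneg _
  have hS2 : S^2 = lam^2*u^2 + (1 - lam^2*(p1^2+p2^2))*v2 := by
    rw [hS]; exact Real.sq_sqrt hE
  have hEw : S^2 - (lam*w)^2 = (1 - lam^2*(q1^2+q2^2))*v2 := by
    rw [hS2, hu, hw, hv]; ring
  have hDpos : 0 < S - lam*w := by nlinarith
  have hND : S - lam*w < S - lam*u := by
    have : w - u = v2 := by rw [hu, hw, hv]; ring
    nlinarith
  have hNpos : 0 < S - lam*u := lt_trans hDpos hND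
  have hD0 : S - lam*w ≠ 0 := ne_of_gt hDpos
  constructor
  · exact (one_lt_div hDpos).mpr hND
  · have hkey : lam^2*((p1*(S-lam*w) - (S-lam*u)*q1)^2 + (p2*(S-lam*w) - (S-lam*u)*q2)^2)
        = ((S-lam*u) - (S-lam*w))^2 := by
      simp only [hu, hw, hv] at hS2 ⊢
      linear_combination (lam^2*((q1-p1)^2+(q2-p2)^2)) * hS2
    have h1 : p1 - (S-lam*u)/(S-lam*w)*q1 = (p1*(S-lam*w) - (S-lam*u)*q1)/(S-lam*w) := by
      field_simp
    have h2 : p2 - (S-lam*u)/(S-lam*w)*q2 = (p2*(S-lam*w) - (S-lam*u)*q2)/(S-lam*w) := by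
      field_simp
    have h3 : (S-lam*u)/(S-lam*w) - 1 = ((S-lam*u) - (S-lam*w))/(S-lam*w) := by
      field_simp
    rw [h1, h2, h3, div_pow, div_pow, div_pow, ← add_div, ← mul_div_assoc,
      div_eq_div_iff (by positivity) (by positivity)]
    linear_combination ((S-lam*w)^2) * hkey

lemma quad_unique (A B C t₁ t₂ : ℝ) (hA : A < 0) (h1 : 0 < A + B + C)
    (e₁ : A*t₁^2 + B*t₁ + C = 0) (e₂ : A*t₂^2 + B*t₂ + C = 0)
    (ht₁ : 1 < t₁) (ht₂ : 1 < t₂) : t₁ = t₂ := by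
  by_contra hne
  have hd : t₁ - t₂ ≠ 0 := sub_ne_zero.mpr hne
  have hsum : A*(t₁+t₂) + B = 0 := by
    have h : (t₁ - t₂) * (A*(t₁+t₂) + B) = 0 := by linear_combination e₁ - e₂
    rcases mul_eq_zero.mp h with h' | h'
    · exact absurd h' hd
    · exact h'
  have hprod : C = A*t₁*t₂ := by linear_combination e₁ - t₁ * hsum
  nlinarith [mul_pos (sub_pos.mpr ht₁) (sub_pos.mpr ht₂)]

lemma dF_pt (lam p1 p2 q1 q2 : ℝ) (h : pt p1 p2 ≠ pt q1 q2) :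
    dF lam (pt p1 p2) (pt q1 q2) =
      (1/lam) * Real.log
        ((Real.sqrt (lam^2*(p1*(q1-p1)+p2*(q2-p2))^2
            + (1 - lam^2*(p1^2+p2^2))*((q1-p1)^2+(q2-p2)^2))
            - lam*(p1*(q1-p1)+p2*(q2-p2))) /
         (Real.sqrt (lam^2*(p1*(q1-p1)+p2*(q2-p2))^2
            + (1 - lam^2*(p1^2+p2^2))*((q1-p1)^2+(q2-p2)^2))
            - lam*(q1*(q1-p1)+q2*(q2-p2)))) := by
  rw [dF, if_neg h, pt_sub, inner_pt, inner_pt, norm_pt_sq, norm_pt_sq]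

lemma circle_bound (lam b c x t : ℝ) (ht : 1 < t)
    (hc2 : lam ^ 2 * (x ^ 2 + (c - t * b) ^ 2) = (t - 1) ^ 2) :
    lam * (c - t * b) ≤ t - 1 ∧ lam * (t * b - c) ≤ t - 1 := by
  have h1 : (lam * (c - t * b)) ^ 2 ≤ (t - 1) ^ 2 := by nlinarith [sq_nonneg (lam * x)]
  constructor <;> nlinarith [h1, ht]

set_option maxHeartbeats 2000000 in
theorem dF_line_to_point (lam a b c : ℝ) (hlam : 0 < lam)
    (hQ : ‖pt a b‖ < 1 / lam) (hb : lam * |b| < 1) (hc : lam * |c| < 1) :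
    dF lam (pt (((1 - lam ^ 2 * b * c + lam * |c - b|) / (1 - lam ^ 2 * b ^ 2)) * a) c) (pt a b)
        = (1 / lam) * Real.log ((1 - lam ^ 2 * b * c + lam * |c - b|) / (1 - lam ^ 2 * b ^ 2)) ∧
    ∀ a' : ℝ, ‖pt a' c‖ < 1 / lam →
      (1 / lam) * Real.log ((1 - lam ^ 2 * b * c + lam * |c - b|) / (1 - lam ^ 2 * b ^ 2)) ≤
        dF lam (pt a' c) (pt a b) := by
  set r := (1 - lam ^ 2 * b * c + lam * |c - b|) / (1 - lam ^ 2 * b ^ 2) with hrdef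
  clear_value r
  -- basic facts
  have hQ2 : lam ^ 2 * (a ^ 2 + b ^ 2) < 1 := by
    have hn : 0 ≤ ‖pt a b‖ := norm_nonneg _
    have h2 : ‖pt a b‖ ^ 2 < (1 / lam) ^ 2 := by
      apply pow_lt_pow_left₀ hQ hn
      norm_num
    rw [norm_pt_sq] at h2
    have hinv : lam ^ 2 * (1 / lam) ^ 2 = 1 := by field_simp
    nlinarith [sq_nonneg lam]
  have hblt : -1 < lam * b ∧ lam * b < 1 := by
    apply abs_lt.mp
    rwa [abs_mul, abs_of_pos hlam]
  have hclt : -1 < lam * c ∧ lam * c < 1 := by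
    apply abs_lt.mp
    rwa [abs_mul, abs_of_pos hlam]
  have hbp : 0 < 1 + lam * b := by linarith [hblt.1]
  have hbm : 0 < 1 - lam * b := by linarith [hblt.2]
  have hden : 0 < 1 - lam ^ 2 * b ^ 2 := by nlinarith [hblt.1, hblt.2]
  have hrc1 : b ≤ c → r = (1 + lam * c) / (1 + lam * b) := by
    intro h
    rw [hrdef, abs_of_nonneg (by linarith : (0:ℝ) ≤ c - b),
      div_eq_div_iff (ne_of_gt hden) (ne_of_gt hbp)]
    ring
  have hrc2 : c ≤ b → r = (1 - lam * c) / (1 - lam * b) := by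
    intro h
    rw [hrdef, abs_of_nonpos (by linarith : c - b ≤ 0),
      div_eq_div_iff (ne_of_gt hden) (ne_of_gt hbm)]
    ring
  have hr0 : 0 < r := by
    rcases le_total b c with h | h
    · rw [hrc1 h]; exact div_pos (by linarith [hclt.1]) hbp
    · rw [hrc2 h]; exact div_pos (by linarith [hclt.2]) hbm
  -- the inequality part (proved first; works for all cases)
  have hineq : ∀ a' : ℝ, ‖pt a' c‖ < 1 / lam →
      (1 / lam) * Real.log r ≤ dF lam (pt a' c) (pt a b) := by
    intro a' ha'
    by_cases heq : pt a' c = pt a b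
    · obtain ⟨ha1, hc1⟩ := pt_inj heq
      have hre : r = 1 := by
        rw [hrdef, hc1, sub_self, abs_zero, mul_zero, add_zero]
        rw [show (1:ℝ) - lam ^ 2 * b * b = 1 - lam ^ 2 * b ^ 2 by ring]
        exact div_self (ne_of_gt hden)
      rw [hre, Real.log_one, mul_zero, dF, if_pos heq]
    · have hv2 : 0 < (a - a') ^ 2 + (b - c) ^ 2 := by
        rcases eq_or_lt_of_le (by positivity : (0:ℝ) ≤ (a - a') ^ 2 + (b - c) ^ 2) with h0 | h0
        · exfalso
          apply heq
          have h1 : a' = a := by nlinarith [sq_nonneg (a - a'), sq_nonneg (b - c)]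
          have h2 : c = b := by nlinarith [sq_nonneg (a - a'), sq_nonneg (b - c)]
          rw [h1, h2]
        · exact h0
      obtain ⟨hρ1, hcirc⟩ := funk_key lam a' c a b
        (Real.sqrt (lam^2*(a'*(a-a')+c*(b-c))^2
          + (1 - lam^2*(a'^2+c^2))*((a-a')^2+(b-c)^2))) hlam hQ2 hv2 rfl
      set S := Real.sqrt (lam^2*(a'*(a-a')+c*(b-c))^2
          + (1 - lam^2*(a'^2+c^2))*((a-a')^2+(b-c)^2)) with hSdef
      set ρ := (S - lam*(a'*(a-a')+c*(b-c)))/(S - lam*(a*(a-a')+b*(b-c))) with hρdef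
      clear_value S ρ
      have hρpos : (0:ℝ) < ρ := lt_trans one_pos hρ1
      obtain ⟨habs1, habs2⟩ := circle_bound lam b c (a' - ρ * a) ρ hρ1
        (by linear_combination hcirc)
      rw [dF_pt lam a' c a b heq, ← hSdef, ← hρdef]
      clear hSdef hρdef hQ ha' heq hcirc hv2 hb hc hrdef
      have hrρ : r ≤ ρ := by
        rcases le_total b c with h | h
        · rw [hrc1 h, div_le_iff₀ hbp]; nlinarith [habs1]
        · rw [hrc2 h, div_le_iff₀ hbm]; nlinarith [habs2]
      apply mul_le_mul_of_nonneg_left _ (le_of_lt (by positivity : (0:ℝ) < 1 / lam))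
      exact Real.log_le_log hr0 hrρ
  refine ⟨?_, hineq⟩
  -- the equality part
  by_cases hcb : c = b
  · subst hcb
    have hre : r = 1 := by
      rw [hrdef, sub_self, abs_zero, mul_zero, add_zero]
      rw [show (1:ℝ) - lam ^ 2 * c * c = 1 - lam ^ 2 * c ^ 2 by ring]
      exact div_self (ne_of_gt hden)
    rw [hre, one_mul, Real.log_one, mul_zero, dF, if_pos rfl]
  · have hne : pt (r * a) c ≠ pt a b := by
      intro h
      exact hcb (pt_inj h).2
    have hv2 : 0 < (a - r * a) ^ 2 + (b - c) ^ 2 := by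
      have : 0 < (b - c) ^ 2 := sq_pos_iff.mpr (sub_ne_zero.mpr fun h => hcb h.symm)
      nlinarith [sq_nonneg (a - r * a)]
    obtain ⟨hρ1, hcirc⟩ := funk_key lam (r * a) c a b
      (Real.sqrt (lam^2*((r*a)*(a-r*a)+c*(b-c))^2
        + (1 - lam^2*((r*a)^2+c^2))*((a-r*a)^2+(b-c)^2))) hlam hQ2 hv2 rfl
    set S := Real.sqrt (lam^2*((r*a)*(a-r*a)+c*(b-c))^2
        + (1 - lam^2*((r*a)^2+c^2))*((a-r*a)^2+(b-c)^2)) with hSdef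
    set ρ := (S - lam*((r*a)*(a-r*a)+c*(b-c)))/(S - lam*(a*(a-r*a)+b*(b-c))) with hρdef
    clear_value S ρ
    rw [dF_pt lam (r * a) c a b hne, ← hSdef, ← hρdef]
    clear hSdef hρdef hne hQ hb hc hv2 hrdef hineq hr0
    -- r satisfies the same circle equation
    have hfr : lam ^ 2 * (c - r * b) ^ 2 = (r - 1) ^ 2 := by
      rcases le_total b c with h | h
      · have h1 : lam * (c - r * b) = r - 1 := by
          rw [hrc1 h]
          field_simp
          ring
        linear_combination (lam * (c - r * b) + (r - 1)) * h1
      · have h1 : lam * (c - r * b) = -(r - 1) := by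
          rw [hrc2 h]
          field_simp
          ring
        linear_combination (lam * (c - r * b) - (r - 1)) * h1
    have hr1 : 1 < r := by
      rcases lt_or_gt_of_ne hcb with h | h
      · rw [hrc2 (le_of_lt h), lt_div_iff₀ hbm]
        have := mul_lt_mul_of_pos_left h hlam
        linarith
      · rw [hrc1 (le_of_lt h), lt_div_iff₀ hbp]
        have := mul_lt_mul_of_pos_left h hlam
        linarith
    -- uniqueness of the root > 1
    have hreq : r = ρ := by
      apply quad_unique (lam ^ 2 * (a ^ 2 + b ^ 2) - 1)
        (2 - 2 * lam ^ 2 * (r * a * a + c * b)) (lam ^ 2 * ((r * a) ^ 2 + c ^ 2) - 1)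
      · linarith
      · have : 0 < (b - c) ^ 2 := sq_pos_iff.mpr (sub_ne_zero.mpr fun h => hcb h.symm)
        nlinarith [mul_pos (mul_pos hlam hlam) this,
          mul_nonneg (mul_nonneg hlam.le hlam.le) (sq_nonneg (r * a - a))]
      · linear_combination hfr
      · linear_combination hcirc
      · exact hr1
      · exact hρ1
    rw [← hreq]
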